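/- For all integers n ≥ 1 and reals r ≥ 1, α ≥ 2, ((Σ_{i=1}^{n+1} i^r)^α − (Σ_{i=1}^{n} i^r)^α)/(n+1)^{α(r+1)-1} ≥ ((Σ_{i=1}^{n+2} i^r)^α − (Σ_{i=1}^{n+1} i^r)^α)/(n+2)^{α(r+1)-1}. -/

import Mathlib

open Real Set

lemma sinh_convex : ConvexOn ℝ (Ici (0:ℝ)) Real.sinh := by
  have h2 : deriv^[2] Real.sinh = Real.sinh := by
    ext y
    simp [Function.iterate_succ_apply', Real.deriv_sinh, Real.deriv_cosh]
  apply convexOn_of_deriv2_nonneg (convex_Ici 0)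
    Real.continuous_sinh.continuousOn
    Real.differentiable_sinh.differentiableOn
  · rw [Real.deriv_sinh]
    exact Real.differentiable_cosh.differentiableOn
  · intro x hx
    rw [h2]
    exact Real.sinh_nonneg_iff.mpr (le_of_lt (by simpa using hx))

lemma sinh_mul_le {r x : ℝ} (hr : 1 ≤ r) (hx : 0 ≤ x) : r * Real.sinh x ≤ Real.sinh (r * x) := by
  have hr0 : 0 < r := lt_of_lt_of_le one_pos hr
  have key := sinh_convex.2 (mem_Ici.mpr (show (0:ℝ) ≤ r * x by positivity))
    (mem_Ici.mpr (le_refl (0:ℝ)))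
    (show (0:ℝ) ≤ 1/r by positivity)
    (show (0:ℝ) ≤ 1 - 1/r by rw [sub_nonneg]; exact div_le_one_of_le₀ hr hr0.le)
    (show (1:ℝ)/r + (1 - 1/r) = 1 by ring)
  simp only [smul_eq_mul, mul_zero, add_zero, Real.sinh_zero] at key
  have hxx : (1:ℝ)/r * (r * x) = x := by field_simp
  rw [hxx] at key
  calc r * Real.sinh x ≤ r * (1/r * Real.sinh (r*x)) := mul_le_mul_of_nonneg_left key hr0.le
    _ = Real.sinh (r*x) := by field_simp

lemma q_nonneg {r t : ℝ} (hr : 1 ≤ r) (ht0 : 0 < t) (ht1 : t < 1) :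
    r * t ^ (r - 1) + t ^ (2 * r) ≤ 1 + r * t ^ (r + 1) := by
  have hL : Real.log t < 0 := Real.log_neg ht0 ht1
  set L := Real.log t with hLdef
  have hx : (0:ℝ) ≤ -L := by linarith
  have hs := sinh_mul_le hr hx
  rw [Real.sinh_eq, Real.sinh_eq] at hs
  have harg1 : r * -L = -(L * r) := by ring
  rw [harg1] at hs
  simp only [neg_neg] at hs
  -- hs : r * ((exp (-L) - exp L) / 2) ≤ (exp (-(L*r)) - exp (L*r)) / 2
  have e1 : t ^ (r-1) = Real.exp (L * r) * Real.exp (-L) := by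
    rw [Real.rpow_def_of_pos ht0, ← Real.exp_add]; ring_nf; rw [hLdef]; ring_nf
  have e2 : t ^ (2*r) = Real.exp (L * r) * Real.exp (L * r) := by
    rw [Real.rpow_def_of_pos ht0, ← Real.exp_add]; ring_nf; rw [hLdef]; ring_nf
  have e3 : t ^ (r+1) = Real.exp (L * r) * Real.exp L := by
    rw [Real.rpow_def_of_pos ht0, ← Real.exp_add]; ring_nf; rw [hLdef]; ring_nf
  rw [e1, e2, e3]
  have hu : 0 < Real.exp (L * r) := Real.exp_pos _
  have huv : Real.exp (L * r) * Real.exp (-(L * r)) = 1 := by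
    rw [← Real.exp_add]; simp
  nlinarith [mul_le_mul_of_nonneg_left hs hu.le, huv]

lemma F_hasDeriv {r t : ℝ} (hr : 1 ≤ r) (ht0 : 0 < t) (ht1 : t < 1) :
    HasDerivAt (fun s : ℝ => (1-s)*(1+s^r)/(1-s^(r+1)))
      ((((-1)*(1+t^r) + (1-t)*(r*t^(r-1))) * (1-t^(r+1)) -
        (1-t)*(1+t^r) * (-((r+1)*t^r))) / (1-t^(r+1))^2) t := by
  have h1 : HasDerivAt (fun s : ℝ => s ^ r) (r * t^(r-1)) t :=
    Real.hasDerivAt_rpow_const (Or.inl ht0.ne')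
  have h2 : HasDerivAt (fun s : ℝ => s ^ (r+1)) ((r+1) * t^r) t := by
    have := Real.hasDerivAt_rpow_const (x := t) (p := r+1) (Or.inl ht0.ne')
    simpa using this
  have hN : HasDerivAt (fun s : ℝ => (1-s)*(1+s^r))
      ((-1)*(1+t^r) + (1-t)*(r*t^(r-1))) t := by
    exact ((hasDerivAt_id t).const_sub 1).mul (h1.const_add 1)
  have hD : HasDerivAt (fun s : ℝ => 1 - s^(r+1)) (-((r+1)*t^r)) t := h2.const_sub 1
  have hne : 1 - t^(r+1) ≠ 0 := by
    have : t^(r+1) < 1 := Real.rpow_lt_one ht0.le ht1 (by linarith)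
    intro h
    rw [sub_eq_zero] at h
    rw [← h] at this
    exact lt_irrefl _ this
  exact hN.div hD hne

lemma F_antitone {r : ℝ} (hr : 1 ≤ r) :
    AntitoneOn (fun t : ℝ => (1-t)*(1+t^r)/(1-t^(r+1))) (Ico (0:ℝ) 1) := by
  have hrpos : (0:ℝ) < r := by linarith
  have hcont : ∀ p : ℝ, 0 < p → Continuous fun s : ℝ => s ^ p := fun p hp =>
    continuous_iff_continuousAt.mpr fun s => Real.continuousAt_rpow_const s p (Or.inr hp.le)
  have hden : ∀ t ∈ Ico (0:ℝ) 1, 1 - t^(r+1) ≠ 0 := by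
    intro t ht
    have : t^(r+1) < 1 := Real.rpow_lt_one ht.1 ht.2 (by linarith)
    linarith
  apply antitoneOn_of_deriv_nonpos (convex_Ico 0 1)
  · apply ContinuousOn.div
    · exact ((continuous_const.sub continuous_id).mul
        (continuous_const.add (hcont r hrpos))).continuousOn
    · exact (continuous_const.sub (hcont (r+1) (by linarith))).continuousOn
    · exact hden
  · rw [interior_Ico]
    intro t ht
    exact ((F_hasDeriv hr ht.1 ht.2).differentiableAt).differentiableWithinAt
  · rw [interior_Ico]
    intro t ht
    rw [(F_hasDeriv hr ht.1 ht.2).deriv]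
    apply div_nonpos_of_nonpos_of_nonneg _ (sq_nonneg _)
    have hq := q_nonneg hr ht.1 ht.2
    have e1 : t^(r+1) = t^r * t := by
      nth_rewrite 1 [show r+1 = r+1 by rfl]
      rw [Real.rpow_add ht.1, Real.rpow_one]
    have e2 : t^(2*r) = t^r * t^r := by rw [two_mul, Real.rpow_add ht.1]
    have e0 : t^r = t^(r-1) * t := by
      nth_rewrite 1 [show r = r-1+1 by ring]
      rw [Real.rpow_add ht.1, Real.rpow_one]
    rw [e2, e1, e0] at hq
    rw [e1, e0]
    nlinarith [hq]

lemma G_mono {r : ℝ} (hr : 1 ≤ r) {a b c d : ℝ} (ha : 0 ≤ a) (hab : a < b)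
    (hc : 0 ≤ c) (hcd : c < d) (hord : a * d ≤ c * b) :
    (d - c) * (d^r + c^r) * (b^(r+1) - a^(r+1)) ≤ (b - a) * (b^r + a^r) * (d^(r+1) - c^(r+1)) := by
  have hb : 0 < b := lt_of_le_of_lt ha hab
  have hd : 0 < d := lt_of_le_of_lt hc hcd
  have ht1 : a/b ∈ Ico (0:ℝ) 1 := ⟨by positivity, (div_lt_one hb).mpr hab⟩
  have ht2 : c/d ∈ Ico (0:ℝ) 1 := ⟨by positivity, (div_lt_one hd).mpr hcd⟩
  have h12 : a/b ≤ c/d := (div_le_div_iff₀ hb hd).mpr hord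
  have hF := F_antitone hr ht1 ht2 h12
  have hcalc : ∀ x y : ℝ, 0 ≤ x → x < y →
      (1 - x/y)*(1 + (x/y)^r)/(1 - (x/y)^(r+1)) =
      (y - x)*(y^r + x^r)/(y^(r+1) - x^(r+1)) := by
    intro x y hx hxy
    have hy : 0 < y := lt_of_le_of_lt hx hxy
    have hyr : (0:ℝ) < y^r := Real.rpow_pos_of_pos hy r
    have hp1 : x^(r+1) < y^(r+1) := Real.rpow_lt_rpow hx hxy (by linarith)
    have hyr1 : y^(r+1) = y^r * y := by
      rw [Real.rpow_add hy, Real.rpow_one]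
    rcases eq_or_lt_of_le hx with h0 | h0
    · rw [← h0]
      rw [Real.zero_rpow (by linarith : r ≠ 0), Real.zero_rpow (by positivity : r+1 ≠ 0)]
      simp [hyr1, Real.zero_rpow (by linarith : r ≠ 0), Real.zero_rpow (by positivity : r+1 ≠ 0)]
      field_simp
    · have hxr1 : x^(r+1) = x^r * x := by rw [Real.rpow_add h0, Real.rpow_one]
      have hne : y^r * y - x^r * x ≠ 0 := by
        rw [hyr1, hxr1] at hp1; intro h; rw [sub_eq_zero] at h; rw [h] at hp1; exact lt_irrefl _ hp1
      rw [Real.div_rpow hx hy.le, Real.div_rpow hx hy.le, hyr1, hxr1]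
      field_simp
  simp only at hF
  rw [hcalc a b ha hab, hcalc c d hc hcd] at hF
  have hbpow : a^(r+1) < b^(r+1) := Real.rpow_lt_rpow ha hab (by linarith)
  have hdpow : c^(r+1) < d^(r+1) := Real.rpow_lt_rpow hc hcd (by linarith)
  rw [div_le_div_iff₀ (by linarith) (by linarith)] at hF
  linear_combination hF

lemma telescope {r : ℝ} (hr : 1 ≤ r) (m : ℕ) :
    ∑ j ∈ Finset.range m, (((j:ℝ)+1)^(r+1) - (j:ℝ)^(r+1)) = (m:ℝ)^(r+1) := by
  have h := Finset.sum_range_sub (f := fun j : ℕ => ((j:ℝ))^(r+1)) m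
  have h0 : ((0:ℕ):ℝ)^(r+1) = 0 := by
    rw [Nat.cast_zero, Real.zero_rpow (by positivity)]
  rw [h0, sub_zero] at h
  rw [← h]
  apply Finset.sum_congr rfl
  intro j _
  push_cast
  ring_nf

lemma key_lemma {r : ℝ} (hr : 1 ≤ r) (n : ℕ) :
    ((∑ j ∈ Finset.range (n+1), ((j:ℝ)+1)^r) + ∑ j ∈ Finset.range (n+2), ((j:ℝ)+1)^r) * ((n:ℝ)+1)^(r+1)
    ≤ ((∑ j ∈ Finset.range n, ((j:ℝ)+1)^r) + ∑ j ∈ Finset.range (n+1), ((j:ℝ)+1)^r) * ((n:ℝ)+2)^(r+1) := by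
  set Tn := ∑ j ∈ Finset.range n, ((j:ℝ)+1)^r with hTn
  set Tm := ∑ j ∈ Finset.range (n+1), ((j:ℝ)+1)^r with hTm
  set Tp := ∑ j ∈ Finset.range (n+2), ((j:ℝ)+1)^r with hTp
  have hper : ∀ j ∈ Finset.range (n+1),
      (((n:ℝ)+2) - ((n:ℝ)+1)) * ((((n:ℝ)+2))^r + (((n:ℝ)+1))^r) * ((((j:ℝ)+1))^(r+1) - ((j:ℝ))^(r+1)) ≤
      ((((j:ℝ)+1)) - ((j:ℝ))) * ((((j:ℝ)+1))^r + ((j:ℝ))^r) * ((((n:ℝ)+2))^(r+1) - (((n:ℝ)+1))^(r+1)) := by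
    intro j hj
    have hj' : (j:ℝ) ≤ (n:ℝ) := by
      exact_mod_cast Nat.lt_succ_iff.mp (Finset.mem_range.mp hj)
    exact G_mono hr (show (0:ℝ) ≤ (j:ℝ) by positivity)
      (show (j:ℝ) < (j:ℝ)+1 by linarith)
      (show (0:ℝ) ≤ (n:ℝ)+1 by positivity)
      (show (n:ℝ)+1 < (n:ℝ)+2 by linarith)
      (by nlinarith)
  have hsum := Finset.sum_le_sum hper
  rw [← Finset.mul_sum, ← Finset.sum_mul, telescope hr (n+1)] at hsum
  push_cast at hsum
  have hTm1 : Tm = Tn + ((n:ℝ)+1)^r := by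
    rw [hTm, Finset.sum_range_succ]
  have hTp1 : Tp = Tm + ((n:ℝ)+2)^r := by
    rw [hTp, Finset.sum_range_succ]
    norm_num
    ring_nf
    rw [hTm]; ring_nf
  have hSg : (∑ j ∈ Finset.range (n+1), ((((j:ℝ)+1)) - ((j:ℝ))) * ((((j:ℝ)+1))^r + ((j:ℝ))^r))
      = Tm + Tn := by
    have e1 : ∀ j ∈ Finset.range (n+1),
        ((((j:ℝ)+1)) - ((j:ℝ))) * ((((j:ℝ)+1))^r + ((j:ℝ))^r) = ((j:ℝ)+1)^r + ((j:ℝ))^r := by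
      intro j _; ring
    rw [Finset.sum_congr rfl e1, Finset.sum_add_distrib]
    congr 1
    rw [Finset.sum_range_succ' (fun j : ℕ => ((j:ℝ))^r) n]
    rw [Nat.cast_zero, Real.zero_rpow (by positivity), add_zero]
    apply Finset.sum_congr rfl
    intro j _
    push_cast
    ring_nf
  rw [hSg] at hsum
  rw [hTp1, hTm1]
  rw [hTm1] at hsum
  ring_nf at hsum ⊢
  linarith [hsum]

lemma incr_translate {α : ℝ} (hα : 1 ≤ α) {x y δ : ℝ} (hx : 0 ≤ x) (hxy : x < y) (hδ : 0 ≤ δ) :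
    y^α - x^α ≤ (y+δ)^α - (x+δ)^α := by
  have hcvx := convexOn_rpow hα
  have hy : (0:ℝ) < y := lt_of_le_of_lt hx hxy
  have s1 := hcvx.secant_mono (a := x) (x := y) (y := y+δ)
    (mem_Ici.mpr hx) (mem_Ici.mpr hy.le) (mem_Ici.mpr (by linarith))
    (by intro h; linarith [h]) (by intro h; linarith [h]) (by linarith)
  have s2 := hcvx.secant_mono (a := y+δ) (x := x) (y := x+δ)
    (mem_Ici.mpr (by linarith)) (mem_Ici.mpr hx) (mem_Ici.mpr (by linarith))
    (by intro h; linarith [h]) (by intro h; linarith [h]) (by linarith)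
  -- s1 : (y^α - x^α)/(y-x) ≤ ((y+δ)^α - x^α)/(y+δ-x)
  -- s2 : (x^α - (y+δ)^α)/(x-(y+δ)) ≤ ((x+δ)^α - (y+δ)^α)/(x+δ-(y+δ))
  have e2 : ((x+δ)^α - (y+δ)^α)/(x+δ-(y+δ)) = ((y+δ)^α - (x+δ)^α)/(y-x) := by
    rw [show x+δ-(y+δ) = -(y-x) by ring, div_neg, ← neg_div, neg_sub]
  have e3 : (x^α - (y+δ)^α)/(x-(y+δ)) = ((y+δ)^α - x^α)/(y+δ-x) := by
    rw [show x-(y+δ) = -(y+δ-x) by ring, div_neg, ← neg_div, neg_sub]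
  rw [e2, e3] at s2
  have hyx : (0:ℝ) < y - x := by linarith
  have chain : (y^α - x^α)/(y-x) ≤ ((y+δ)^α - (x+δ)^α)/(y-x) := le_trans s1 s2
  calc y^α - x^α = ((y^α - x^α)/(y-x)) * (y-x) := by field_simp
    _ ≤ (((y+δ)^α - (x+δ)^α)/(y-x)) * (y-x) := by
        apply mul_le_mul_of_nonneg_right chain hyx.le
    _ = (y+δ)^α - (x+δ)^α := by field_simp

lemma spread_sum {β : ℝ} (hβ : 1 ≤ β) {x y δ : ℝ} (h0 : 0 ≤ y - δ) (hyx : y ≤ x) (hδ : 0 < δ) :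
    x^β + y^β ≤ (x+δ)^β + (y-δ)^β := by
  have h := incr_translate hβ (x := y-δ) (y := y) (δ := x-y+δ) h0 (by linarith) (by linarith)
  have e1 : y + (x-y+δ) = x+δ := by ring
  have e2 : y-δ + (x-y+δ) = x := by ring
  rw [e1, e2] at h
  linarith

lemma Fm_hasDeriv {α M : ℝ} (hα : 1 ≤ α) (e : ℝ) :
    HasDerivAt (fun e : ℝ => (M+e)^α - (M-e)^α)
      (α*(M+e)^(α-1) + α*(M-e)^(α-1)) e := by
  have hp : HasDerivAt (fun e : ℝ => (M+e)^α) (α*(M+e)^(α-1)) e := by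
    have h := Real.hasDerivAt_rpow_const (x := M+e) (p := α) (Or.inr hα)
    have hi : HasDerivAt (fun e : ℝ => M+e) 1 e := (hasDerivAt_id e).const_add M
    simpa [Function.comp_def] using h.comp e hi
  have hm : HasDerivAt (fun e : ℝ => (M-e)^α) (-(α*(M-e)^(α-1))) e := by
    have h := Real.hasDerivAt_rpow_const (x := M-e) (p := α) (Or.inr hα)
    have hi : HasDerivAt (fun e : ℝ => M-e) (-1) e := (hasDerivAt_id e).const_sub M
    have := h.comp e hi
    simpa [Function.comp_def] using this
  have h := hp.sub hm
  rw [sub_neg_eq_add] at h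
  exact h

lemma Fm_slope {α M e1 e2 : ℝ} (hα : 2 ≤ α) (he2 : 0 < e2) (he12 : e2 ≤ e1) (he1M : e1 ≤ M) :
    (M+e2)^α - (M-e2)^α ≤ (e2/e1) * ((M+e1)^α - (M-e1)^α) := by
  have hα1 : (1:ℝ) ≤ α := by linarith
  have he1 : 0 < e1 := lt_of_lt_of_le he2 he12
  have hM : 0 < M := lt_of_lt_of_le he1 he1M
  have hcont : Continuous fun s : ℝ => s ^ α :=
    continuous_iff_continuousAt.mpr fun s => Real.continuousAt_rpow_const s α (Or.inr (by linarith))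
  have hconv : ConvexOn ℝ (Icc 0 M) (fun e : ℝ => (M+e)^α - (M-e)^α) := by
    apply MonotoneOn.convexOn_of_deriv (convex_Icc 0 M)
    · exact ((hcont.comp (continuous_const.add continuous_id)).sub
        (hcont.comp (continuous_const.sub continuous_id))).continuousOn
    · intro e _
      exact (Fm_hasDeriv hα1 e).differentiableAt.differentiableWithinAt
    · rw [interior_Icc]
      intro a ha b hb hab
      rw [(Fm_hasDeriv hα1 a).deriv, (Fm_hasDeriv hα1 b).deriv]
      rcases eq_or_lt_of_le hab with rfl | hab'
      · exact le_refl _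
      · have hsp := spread_sum (β := α - 1) (by linarith)
          (x := M+a) (y := M-a) (δ := b-a)
          (by simp only [mem_Ioo] at hb; linarith [hb.2])
          (by simp only [mem_Ioo] at ha; linarith [ha.1]) (by linarith)
        have e1' : M+a+(b-a) = M+b := by ring
        have e2' : M-a-(b-a) = M-b := by ring
        rw [e1', e2'] at hsp
        nlinarith [hsp]
  have key := hconv.2 (mem_Icc.mpr ⟨le_refl (0:ℝ), hM.le⟩) (mem_Icc.mpr ⟨he1.le, he1M⟩)
    (show (0:ℝ) ≤ 1 - e2/e1 by rw [sub_nonneg]; exact (div_le_one he1).mpr he12)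
    (show (0:ℝ) ≤ e2/e1 by positivity)
    (show (1 - e2/e1) + e2/e1 = 1 by ring)
  have he2e : (1 - e2/e1) • (0:ℝ) + (e2/e1) • e1 = e2 := by
    simp only [smul_eq_mul, mul_zero, zero_add]
    field_simp
  rw [he2e] at key
  simp only [smul_eq_mul] at key
  have hz : (M+(0:ℝ))^α - (M-(0:ℝ))^α = 0 := by norm_num
  rw [hz] at key
  linarith [key]
theorem stmt_14 (n : ℕ) (hn : 1 ≤ n) (r α : ℝ) (hr : 1 ≤ r) (hα : 2 ≤ α) :
    ((∑ i ∈ Finset.Icc 1 (n + 2), (i : ℝ) ^ r) ^ α -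
        (∑ i ∈ Finset.Icc 1 (n + 1), (i : ℝ) ^ r) ^ α) / (n + 2 : ℝ) ^ (α * (r + 1) - 1) ≤
    ((∑ i ∈ Finset.Icc 1 (n + 1), (i : ℝ) ^ r) ^ α -
        (∑ i ∈ Finset.Icc 1 n, (i : ℝ) ^ r) ^ α) / (n + 1 : ℝ) ^ (α * (r + 1) - 1) := by
  have hα1 : (1:ℝ) ≤ α := by linarith
  have hIcc : ∀ m : ℕ, (∑ i ∈ Finset.Icc 1 m, ((i:ℕ):ℝ)^r) = ∑ j ∈ Finset.range m, ((j:ℝ)+1)^r := by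
    intro m
    induction m with
    | zero => simp
    | succ k ih =>
      rw [Finset.sum_Icc_succ_top (by omega : 1 ≤ k+1), Finset.sum_range_succ, ih]
      push_cast
      ring_nf
  set A := ∑ i ∈ Finset.Icc 1 n, ((i:ℕ):ℝ)^r with hA
  set B := ∑ i ∈ Finset.Icc 1 (n+1), ((i:ℕ):ℝ)^r with hB
  set C := ∑ i ∈ Finset.Icc 1 (n+2), ((i:ℕ):ℝ)^r with hC
  set p : ℝ := (n:ℝ)+1 with hpdef
  set q : ℝ := (n:ℝ)+2 with hqdef
  have hp : (0:ℝ) < p := by positivity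
  have hq : (0:ℝ) < q := by positivity
  have hpq : p < q := by simp [hpdef, hqdef]
  have hP : (0:ℝ) < p^(r+1) := Real.rpow_pos_of_pos hp _
  have hQ : (0:ℝ) < q^(r+1) := Real.rpow_pos_of_pos hq _
  have hApos : (0:ℝ) < A := by
    apply Finset.sum_pos
    · intro i hi
      have : 1 ≤ i := (Finset.mem_Icc.mp hi).1
      have : (0:ℝ) < (i:ℝ) := by exact_mod_cast Nat.lt_of_lt_of_le Nat.zero_lt_one this
      exact Real.rpow_pos_of_pos this r
    · exact ⟨1, Finset.mem_Icc.mpr ⟨le_refl 1, hn⟩⟩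
  have hBA : B = A + p^r := by
    rw [hB, hA, Finset.sum_Icc_succ_top (by omega : 1 ≤ n+1)]
    push_cast
    ring_nf
    rw [hpdef]; ring_nf
  have hCB : C = B + q^r := by
    rw [hC, hB, Finset.sum_Icc_succ_top (by omega : 1 ≤ n+2)]
    push_cast
    ring_nf
    rw [hqdef]; ring_nf
  have hprpos : (0:ℝ) < p^r := Real.rpow_pos_of_pos hp r
  have hqrpos : (0:ℝ) < q^r := Real.rpow_pos_of_pos hq r
  have hBpos : (0:ℝ) < B := by rw [hBA]; positivity
  have hCpos : (0:ℝ) < C := by rw [hCB]; positivity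
  -- the key lemma
  have key : (B + C) * p^(r+1) ≤ (A + B) * q^(r+1) := by
    have h := key_lemma hr n
    rw [hA, hB, hC, hIcc n, hIcc (n+1), hIcc (n+2)]
    exact h
  -- normalized quantities
  have hPrw : p^(r+1) = p^r * p := by rw [Real.rpow_add hp, Real.rpow_one]
  have hQrw : q^(r+1) = q^r * q := by rw [Real.rpow_add hq, Real.rpow_one]
  set a' : ℝ := A / p^(r+1) with ha'
  set b' : ℝ := B / p^(r+1) with hb'
  set b'' : ℝ := B / q^(r+1) with hb''
  set c'' : ℝ := C / q^(r+1) with hc''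
  have hb'a' : b' - a' = 1/p := by
    rw [hb', ha', hBA, hPrw]
    field_simp
    ring
  have hc''b'' : c'' - b'' = 1/q := by
    rw [hc'', hb'', hCB, hQrw]
    field_simp
    ring
  have hkey' : b'' + c'' ≤ a' + b' := by
    rw [ha', hb', hb'', hc'', ← add_div, ← add_div]
    rw [div_le_div_iff₀ hQ hP]
    linarith [key]
  set M : ℝ := (a' + b')/2 with hM
  set e1 : ℝ := 1/(2*p) with he1
  set e2 : ℝ := 1/(2*q) with he2
  set δ : ℝ := M - (b'' + c'')/2 with hδ
  have hδ0 : 0 ≤ δ := by rw [hδ, hM]; linarith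
  have he1pos : 0 < e1 := by positivity
  have he2pos : 0 < e2 := by positivity
  have he12 : e2 ≤ e1 := by
    rw [he1, he2]
    apply div_le_div_of_nonneg_left (by norm_num) (by positivity) (by linarith)
  have ha'nonneg : 0 ≤ a' := by positivity
  have he1' : 2 * e1 = 1/p := by rw [he1]; field_simp
  have he2' : 2 * e2 = 1/q := by rw [he2]; field_simp
  have ha'M : a' = M - e1 := by
    rw [hM]; linarith [hb'a', he1']
  have hb'M : b' = M + e1 := by
    rw [hM]; linarith [hb'a', he1']
  have he1M : e1 ≤ M := by
    have := ha'M
    linarith [ha'nonneg, this]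
  have hb''δ : b'' + δ = M - e2 := by
    rw [hδ]; linarith [hc''b'', he2']
  have hc''δ : c'' + δ = M + e2 := by
    rw [hδ]; linarith [hc''b'', he2']
  -- step A: translation
  have stepA : c''^α - b''^α ≤ (M+e2)^α - (M-e2)^α := by
    have h := incr_translate hα1 (x := b'') (y := c'') (δ := δ)
      (by positivity) (by linarith [hc''b'', he2pos, hq]) hδ0
    rw [show c'' + δ = M + e2 from hc''δ, show b'' + δ = M - e2 from hb''δ] at h
    · linarith [h]
  -- step B: symmetric slope
  have stepB : (M+e2)^α - (M-e2)^α ≤ (e2/e1) * ((M+e1)^α - (M-e1)^α) :=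
    Fm_slope hα he2pos he12 he1M
  have he2e1 : e2/e1 = p/q := by
    rw [he1, he2]
    field_simp
  have main' : q * (c''^α - b''^α) ≤ p * ((M+e1)^α - (M-e1)^α) := by
    have h1 : q * (c''^α - b''^α) ≤ q * ((e2/e1) * ((M+e1)^α - (M-e1)^α)) := by
      apply mul_le_mul_of_nonneg_left (le_trans stepA stepB) hq.le
    calc q * (c''^α - b''^α) ≤ q * ((e2/e1) * ((M+e1)^α - (M-e1)^α)) := h1
      _ = p * ((M+e1)^α - (M-e1)^α) := by rw [he2e1]; field_simp
  rw [← ha'M, ← hb'M] at main'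
  -- convert goal
  have hconv2 : ∀ X Y W : ℝ, 0 ≤ X → 0 ≤ Y → 0 < W →
      (Y^α - X^α)/W^(α*(r+1)-1) = W * ((Y/W^(r+1))^α - (X/W^(r+1))^α) := by
    intro X Y W hX hY hW
    have hWP : (0:ℝ) < W^(r+1) := Real.rpow_pos_of_pos hW _
    rw [Real.div_rpow hY hWP.le, Real.div_rpow hX hWP.le]
    rw [← Real.rpow_mul hW.le]
    rw [Real.rpow_sub hW, Real.rpow_one]
    rw [show (r+1)*α = α*(r+1) by ring]
    have hpow : (0:ℝ) < W^(α*(r+1)) := Real.rpow_pos_of_pos hW _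
    field_simp
  calc ((C^α - B^α))/ q^(α*(r+1)-1) = q * ((C/q^(r+1))^α - (B/q^(r+1))^α) := by
        rw [hconv2 B C q hBpos.le hCpos.le hq]
    _ = q * (c''^α - b''^α) := by rw [← hb'', ← hc'']
    _ ≤ p * (b'^α - a'^α) := main'
    _ = p * ((B/p^(r+1))^α - (A/p^(r+1))^α) := by rw [← ha', ← hb']
    _ = ((B^α - A^α))/ p^(α*(r+1)-1) := by rw [hconv2 A B p hApos.le hBpos.le hp]
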